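/- If Λ is a Λ-sequence and f : [0,1] → ℝ is Lebesgue-integrable with var_Λ(f) < ∞, then for every n ∈ ℕ the Kantorovich polynomial satisfies V_Λ(K_nf) ≤ var_Λ(f); consequently var_Λ(K_nf) ≤ var_Λ(f), i.e. the Kantorovich polynomials diminish the lower Λ-variation. -/

import Mathlib

open Filter Set MeasureTheory
open scoped ENNReal Topology

/-- `l` is a Λ-sequence (indexed from 0, so `l 0` plays the role of `λ₁`):
a nondecreasing sequence of positive reals whose reciprocals have divergent sum. -/
def IsLambdaSeq (l : ℕ → ℝ) : Prop :=
  Monotone l ∧ (∀ n, 0 < l n) ∧ ¬ Summable (fun n => 1 / l n)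

/-- A proper Λ-sequence: additionally `λₙ → ∞`. -/
def IsProperLambdaSeq (l : ℕ → ℝ) : Prop :=
  IsLambdaSeq l ∧ Tendsto l atTop atTop

/-- The Λ-variation of `f` computed over partition points taken from `K`:
the supremum of `∑ⱼ |f(x_{j+1}) - f(x_j)| / λ_{β(j)}` over all `m`, all nondecreasing
tuples `x₁ ≤ … ≤ x_{m+1}` of points of `K` and all permutations `β` of the gaps. -/
noncomputable def lamVarOn (l : ℕ → ℝ) (f : ℝ → ℝ) (K : Set ℝ) : ℝ≥0∞ :=
  ⨆ (m : ℕ) (x : Fin (m + 1) → ℝ) (_ : Monotone x) (_ : ∀ j, x j ∈ K)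
    (β : Equiv.Perm (Fin m)),
    ∑ j : Fin m, ENNReal.ofReal (|f (x j.succ) - f (x j.castSucc)| / l (β j))

/-- The Λ-variation of `f : [0,1] → ℝ`. -/
noncomputable def lamVar (l : ℕ → ℝ) (f : ℝ → ℝ) : ℝ≥0∞ :=
  lamVarOn l f (Set.Icc 0 1)

/-- The norm `‖f‖_Λ = V_Λ(f) + |f 0|` (valued in `[0,∞]`). -/
noncomputable def lamNorm (l : ℕ → ℝ) (f : ℝ → ℝ) : ℝ≥0∞ :=
  lamVar l f + ENNReal.ofReal |f 0|

/-- `f` is continuous in Λ-variation: `V_{Λ_(m)}(f) → 0` as `m → ∞`. -/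
def ContInLamVar (l : ℕ → ℝ) (f : ℝ → ℝ) : Prop :=
  Tendsto (fun m => lamVar (fun n => l (n + m)) f) atTop (𝓝 0)

/-- The restricted Λ-variation `V_{Λ,δ}(f)`: the supremum of `∑ⱼ |f(bⱼ) - f(aⱼ)| / λⱼ`
over all finite sequences of nonoverlapping closed subintervals `[aⱼ, bⱼ]` of `[0,1]`
of length at most `δ`, listed in any order. -/
noncomputable def lamVarDelta (l : ℕ → ℝ) (δ : ℝ) (f : ℝ → ℝ) : ℝ≥0∞ :=
  ⨆ (k : ℕ) (a : Fin k → ℝ) (b : Fin k → ℝ)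
    (_ : ∀ j, 0 ≤ a j ∧ a j ≤ b j ∧ b j ≤ 1 ∧ b j - a j ≤ δ)
    (_ : ∀ i j, i ≠ j → b i ≤ a j ∨ b j ≤ a i),
    ∑ j : Fin k, ENNReal.ofReal (|f (b j) - f (a j)| / l j)

/-- The `n`-th Bernstein polynomial of `f : [0,1] → ℝ`. -/
noncomputable def bern (n : ℕ) (f : ℝ → ℝ) (x : ℝ) : ℝ :=
  ∑ k ∈ Finset.range (n + 1),
    f ((k : ℝ) / n) * (n.choose k : ℝ) * x ^ k * (1 - x) ^ (n - k)

/-- The `n`-th Kantorovich polynomial of `f : [0,1] → ℝ`. -/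
noncomputable def kant (n : ℕ) (f : ℝ → ℝ) (x : ℝ) : ℝ :=
  ∑ k ∈ Finset.range (n + 1),
    (n.choose k : ℝ) * x ^ k * (1 - x) ^ (n - k) *
      ((n + 1) * ∫ t in ((k : ℝ) / (n + 1))..(((k : ℝ) + 1) / (n + 1)), f t)

/-- The lower Λ-variation `var_Λ(f) = inf { V_Λ(g) : g = f a.e. on [0,1] }`. -/
noncomputable def lowerLamVar (l : ℕ → ℝ) (f : ℝ → ℝ) : ℝ≥0∞ :=
  ⨅ (g : ℝ → ℝ) (_ : f =ᵐ[volume.restrict (Set.Icc 0 1)] g), lamVar l g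

namespace KantAux

/-- Bernstein basis polynomial. -/
noncomputable def bp (n k : ℕ) (x : ℝ) : ℝ := (n.choose k : ℝ) * x ^ k * (1 - x) ^ (n - k)

/-- Partial sums of the Bernstein basis: `Gp n m x = ∑_{i<m} bp n i x`, i.e. the
binomial cumulative distribution function. -/
noncomputable def Gp (n m : ℕ) (x : ℝ) : ℝ := ∑ i ∈ Finset.range m, bp n i x

noncomputable def Ap (n i : ℕ) (x : ℝ) : ℝ :=
  (i : ℝ) * (n.choose i : ℝ) * x ^ (i - 1) * (1 - x) ^ (n - i)

lemma bp_nonneg {n k : ℕ} {x : ℝ} (hx : x ∈ Icc (0:ℝ) 1) : 0 ≤ bp n k x := by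
  have h1 : (0:ℝ) ≤ x := hx.1
  have h2 : (0:ℝ) ≤ 1 - x := by linarith [hx.2]
  unfold bp; positivity

lemma Gp_mono_idx {n : ℕ} {x : ℝ} (hx : x ∈ Icc (0:ℝ) 1) {k m : ℕ} (h : k ≤ m) :
    Gp n k x ≤ Gp n m x := by
  unfold Gp
  exact Finset.sum_le_sum_of_subset_of_nonneg (Finset.range_subset_range.mpr h)
    (fun i _ _ => bp_nonneg hx)

lemma Gp_zero (n : ℕ) (x : ℝ) : Gp n 0 x = 0 := by simp [Gp]

lemma Gp_succ (n k : ℕ) (x : ℝ) : Gp n (k+1) x = Gp n k x + bp n k x := by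
  simp [Gp, Finset.sum_range_succ]

lemma Gp_top {n m : ℕ} (x : ℝ) (hm : n + 1 ≤ m) : Gp n m x = 1 := by
  have h1 : Gp n m x = Gp n (n+1) x := by
    unfold Gp
    refine (Finset.sum_subset (Finset.range_subset_range.mpr hm) ?_).symm
    intro i _ hi
    have : n < i := by simpa using hi
    simp [bp, Nat.choose_eq_zero_of_lt this]
  rw [h1]
  have := add_pow x (1-x) n
  simp only [add_sub_cancel, one_pow] at this
  unfold Gp bp
  refine Eq.trans ?_ this.symm
  exact Finset.sum_congr rfl fun i _ => by ring

lemma hasDerivAt_bp (n i : ℕ) (x : ℝ) :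
    HasDerivAt (fun y => bp n i y) (Ap n i x - Ap n (i+1) x) x := by
  have h1 : HasDerivAt (fun y : ℝ => (n.choose i : ℝ) * y ^ i)
      ((n.choose i : ℝ) * ((i:ℝ) * x ^ (i-1))) x := (hasDerivAt_pow i x).const_mul _
  have h0 : HasDerivAt (fun y : ℝ => 1 - y) (-1) x := (hasDerivAt_id x).const_sub 1
  have h2 : HasDerivAt (fun y : ℝ => (1 - y) ^ (n - i))
      ((((n-i : ℕ):ℝ) * (1-x) ^ (n - i - 1)) * (-1)) x :=
    (hasDerivAt_pow (n-i) (1-x)).comp x h0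
  have h3 := h1.mul h2
  have heq : (fun y => bp n i y) = fun y : ℝ => ((n.choose i : ℝ) * y ^ i) * (1 - y) ^ (n - i) := by
    funext y; simp [bp, mul_assoc]
  rw [heq]
  refine h3.congr_deriv (Eq.symm ?_)
  have hc : ((n.choose (i+1) : ℕ) : ℝ) * ((i:ℝ)+1) = (n.choose i : ℝ) * ((n - i : ℕ) : ℝ) := by
    exact_mod_cast Nat.choose_succ_right_eq n i
  have hsub : n - (i+1) = n - i - 1 := by omega
  simp only [Ap, hsub]
  push_cast
  linear_combination (-(x ^ i * (1 - x) ^ (n - i - 1))) * hc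

lemma hasDerivAt_Gp (n m : ℕ) (x : ℝ) :
    HasDerivAt (fun y => Gp n m y) (-(Ap n m x)) x := by
  have h : HasDerivAt (fun y => Gp n m y) (∑ i ∈ Finset.range m, (Ap n i x - Ap n (i+1) x)) x := by
    have := HasDerivAt.fun_sum (fun i (_ : i ∈ Finset.range m) => hasDerivAt_bp n i x)
    simpa [Gp] using this
  have e : ∑ i ∈ Finset.range m, (Ap n i x - Ap n (i+1) x) = Ap n 0 x - Ap n m x :=
    Finset.sum_range_sub' (fun i => Ap n i x) m
  have e0 : Ap n 0 x = 0 := by simp [Ap]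
  rw [e, e0, zero_sub] at h
  exact h

lemma Gp_anti (n m : ℕ) : AntitoneOn (fun x => Gp n m x) (Icc (0:ℝ) 1) := by
  refine antitoneOn_of_deriv_nonpos (convex_Icc 0 1) ?_ ?_ ?_
  · exact fun x _ => (hasDerivAt_Gp n m x).continuousAt.continuousWithinAt
  · exact fun x _ => (hasDerivAt_Gp n m x).differentiableAt.differentiableWithinAt
  · intro x hx
    rw [interior_Icc] at hx
    rw [(hasDerivAt_Gp n m x).deriv]
    have h1 : (0:ℝ) ≤ x := le_of_lt hx.1
    have h2 : (0:ℝ) ≤ 1 - x := by linarith [hx.2]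
    have : 0 ≤ Ap n m x := by unfold Ap; positivity
    linarith

open scoped Classical in
/-- Quantile function of the binomial distribution with parameters `n`, `x`. -/
noncomputable def Np (n : ℕ) (x v : ℝ) : ℕ :=
  ((Finset.range n).filter fun k => Gp n (k + 1) x < v).card

lemma Np_le (n : ℕ) (x v : ℝ) : Np n x v ≤ n := by
  classical
  calc ((Finset.range n).filter fun k => Gp n (k + 1) x < v).card
      ≤ (Finset.range n).card := Finset.card_filter_le _ _
    _ = n := Finset.card_range n

lemma Np_le_iff {n k : ℕ} {x v : ℝ} (hx : x ∈ Icc (0:ℝ) 1) (hv : v ≤ 1) (hk : k ≤ n) :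
    Np n x v ≤ k ↔ v ≤ Gp n (k+1) x := by
  classical
  constructor
  · intro hN
    by_contra hvg
    push_neg at hvg
    have hkn : k < n := by
      rcases lt_or_eq_of_le hk with h | h
      · exact h
      · exfalso; rw [h] at hvg; rw [Gp_top x le_rfl] at hvg; linarith
    have hsub : Finset.range (k+1) ⊆ (Finset.range n).filter fun j => Gp n (j + 1) x < v := by
      intro i hi
      have hik : i < k + 1 := Finset.mem_range.mp hi
      refine Finset.mem_filter.mpr ⟨Finset.mem_range.mpr (by omega), ?_⟩
      exact lt_of_le_of_lt (Gp_mono_idx hx (by omega)) hvg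
    have := Finset.card_le_card hsub
    rw [Finset.card_range] at this
    unfold Np at hN
    omega
  · intro hvG
    have hsub : ((Finset.range n).filter fun j => Gp n (j + 1) x < v) ⊆ Finset.range k := by
      intro i hi
      rcases Finset.mem_filter.mp hi with ⟨_, hGi⟩
      refine Finset.mem_range.mpr ?_
      by_contra hik
      push_neg at hik
      exact absurd (lt_of_lt_of_le hGi (le_trans hvG (Gp_mono_idx hx (by omega)))) (lt_irrefl _)
    have := Finset.card_le_card hsub
    rw [Finset.card_range] at this
    unfold Np
    omega

lemma Np_eq {n k : ℕ} {x v : ℝ} (hx : x ∈ Icc (0:ℝ) 1) (hk : k ≤ n)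
    (hv : v ∈ Ioc (Gp n k x) (Gp n (k+1) x)) : Np n x v = k := by
  have hv1 : v ≤ 1 := le_trans hv.2
    (by rw [← Gp_top x (le_refl (n+1))]; exact Gp_mono_idx hx (by omega))
  have h1 : Np n x v ≤ k := (Np_le_iff hx hv1 hk).mpr hv.2
  rcases Nat.eq_zero_or_pos k with h | h
  · omega
  · obtain ⟨k', rfl⟩ : ∃ k', k = k' + 1 := ⟨k - 1, by omega⟩
    by_contra hne
    have h2 : Np n x v ≤ k' := by omega
    have := (Np_le_iff hx hv1 (by omega : k' ≤ n)).mp h2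
    exact absurd (lt_of_lt_of_le hv.1 this) (lt_irrefl _)

lemma Np_mono_x {n : ℕ} {v x x' : ℝ} (hx : x ∈ Icc (0:ℝ) 1) (hx' : x' ∈ Icc (0:ℝ) 1)
    (h : x ≤ x') : Np n x v ≤ Np n x' v := by
  classical
  refine Finset.card_le_card ?_
  intro i hi
  rcases Finset.mem_filter.mp hi with ⟨hir, hG⟩
  exact Finset.mem_filter.mpr ⟨hir, lt_of_le_of_lt (Gp_anti n (i+1) hx hx' h) hG⟩

/-- The Kantorovich coefficients. -/
noncomputable def cc (n : ℕ) (g : ℝ → ℝ) (k : ℕ) : ℝ :=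
  ((n:ℝ)+1) * ∫ t in ((k:ℝ)/((n:ℝ)+1))..(((k:ℝ)+1)/((n:ℝ)+1)), g t

lemma kant_eq_sum (n : ℕ) (g : ℝ → ℝ) (x : ℝ) :
    kant n g x = ∑ k ∈ Finset.range (n+1), bp n k x * cc n g k := rfl

lemma subint_subset {n k : ℕ} (hk : k ≤ n) :
    Ioc ((k:ℝ)/((n:ℝ)+1)) (((k:ℝ)+1)/((n:ℝ)+1)) ⊆ Icc (0:ℝ) 1 := by
  have hn : (0:ℝ) < (n:ℝ)+1 := by positivity
  intro t ht
  constructor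
  · have h0 : (0:ℝ) ≤ (k:ℝ)/((n:ℝ)+1) := by positivity
    linarith [ht.1]
  · refine le_trans ht.2 ?_
    rw [div_le_one hn]
    have : (k:ℝ) ≤ (n:ℝ) := Nat.cast_le.mpr hk
    linarith

lemma intervalIntegrable_aux {n : ℕ} {g : ℝ → ℝ} (hg : IntegrableOn g (Icc 0 1) volume)
    {k : ℕ} (hk : k ≤ n) :
    IntervalIntegrable g volume ((k:ℝ)/((n:ℝ)+1)) (((k:ℝ)+1)/((n:ℝ)+1)) := by
  have hn : (0:ℝ) < (n:ℝ)+1 := by positivity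
  have hab : (k:ℝ)/((n:ℝ)+1) ≤ ((k:ℝ)+1)/((n:ℝ)+1) := by gcongr; linarith
  rw [intervalIntegrable_iff_integrableOn_Ioc_of_le hab]
  exact hg.mono_set (subint_subset hk)

lemma integrableOn_comp {n : ℕ} {g : ℝ → ℝ} (hg : IntegrableOn g (Icc 0 1) volume)
    {k : ℕ} (hk : k ≤ n) :
    IntegrableOn (fun u => g (((k:ℝ)+u)/((n:ℝ)+1))) (Ioc 0 1) volume := by
  have hn : (0:ℝ) < (n:ℝ)+1 := by positivity
  set a : ℝ := ((n:ℝ)+1)⁻¹ with ha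
  have ha0 : a ≠ 0 := by positivity
  have h0 := intervalIntegrable_aux hg hk
  have h1 := h0.comp_add_right ((k:ℝ)*a)
  have e1 : (k:ℝ)/((n:ℝ)+1) - (k:ℝ)*a = 0 := by rw [ha, div_eq_mul_inv]; ring
  have e2 : ((k:ℝ)+1)/((n:ℝ)+1) - (k:ℝ)*a = a := by
    rw [ha, div_eq_mul_inv]; ring
  rw [e1, e2] at h1
  have h2 := h1.comp_mul_right (c := a)
  rw [zero_div, div_self ha0] at h2
  have e3 : (fun u : ℝ => g (((k:ℝ)+u)/((n:ℝ)+1))) = fun u : ℝ => g (u * a + (k:ℝ)*a) := by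
    funext u; congr 1; rw [ha, div_eq_mul_inv]; ring
  rw [e3]
  exact (intervalIntegrable_iff_integrableOn_Ioc_of_le zero_le_one).mp h2

lemma cc_eq (n : ℕ) (g : ℝ → ℝ) (k : ℕ) :
    cc n g k = ∫ u in Ioc (0:ℝ) 1, g (((k:ℝ)+u)/((n:ℝ)+1)) := by
  have hn : (0:ℝ) < (n:ℝ)+1 := by positivity
  set a : ℝ := ((n:ℝ)+1)⁻¹ with ha
  have ha0 : a ≠ 0 := by positivity
  have e0 : (∫ u in Ioc (0:ℝ) 1, g (((k:ℝ)+u)/((n:ℝ)+1)))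
      = ∫ u in (0:ℝ)..1, g (a * u + (k:ℝ)*a) := by
    rw [intervalIntegral.integral_of_le zero_le_one]
    refine setIntegral_congr_fun measurableSet_Ioc fun u _ => ?_
    congr 1; rw [ha, div_eq_mul_inv]; ring
  rw [e0, intervalIntegral.integral_comp_mul_add g ha0 ((k:ℝ)*a)]
  have e1 : a * 0 + (k:ℝ)*a = (k:ℝ)/((n:ℝ)+1) := by rw [ha, div_eq_mul_inv]; ring
  have e2 : a * 1 + (k:ℝ)*a = ((k:ℝ)+1)/((n:ℝ)+1) := by rw [ha, div_eq_mul_inv]; ring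
  rw [e1, e2, cc, smul_eq_mul, ha, inv_inv]

section Rep
variable {n : ℕ} {g : ℝ → ℝ} {x : ℝ}

lemma piece_subset (hx : x ∈ Icc (0:ℝ) 1) {k : ℕ} (hk : k < n+1) :
    Ioc (Gp n k x) (Gp n (k+1) x) ⊆ Ioc (0:ℝ) 1 := by
  intro v hv
  constructor
  · have : Gp n 0 x ≤ Gp n k x := Gp_mono_idx hx (Nat.zero_le k)
    rw [Gp_zero] at this
    exact lt_of_le_of_lt this hv.1
  · refine le_trans hv.2 ?_
    rw [← Gp_top x (le_refl (n+1))]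
    exact Gp_mono_idx hx (by omega)

lemma mem_piece_iff (hx : x ∈ Icc (0:ℝ) 1) {k : ℕ} (hk : k ≤ n) {v : ℝ} (hv : v ∈ Ioc (0:ℝ) 1) :
    v ∈ Ioc (Gp n k x) (Gp n (k+1) x) ↔ Np n x v = k := by
  constructor
  · exact fun h => Np_eq hx hk h
  · intro h
    constructor
    · rcases Nat.eq_zero_or_pos k with h0 | h0
      · rw [h0, Gp_zero]; exact hv.1
      · obtain ⟨k', rfl⟩ : ∃ k', k = k' + 1 := ⟨k - 1, by omega⟩
        by_contra hle
        push_neg at hle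
        have : Np n x v ≤ k' := (Np_le_iff hx hv.2 (by omega)).mpr hle
        omega
    · exact (Np_le_iff hx hv.2 hk).mp (le_of_eq h)

/-- The step function version. -/
noncomputable def stepf (n : ℕ) (g : ℝ → ℝ) (x : ℝ) : ℝ → ℝ :=
  fun v => ∑ k ∈ Finset.range (n+1), (Ioc (Gp n k x) (Gp n (k+1) x)).indicator
    (fun _ => cc n g k) v

lemma stepf_eq (hx : x ∈ Icc (0:ℝ) 1) {v : ℝ} (hv : v ∈ Ioc (0:ℝ) 1) :
    stepf n g x v = cc n g (Np n x v) := by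
  unfold stepf
  have hmem : Np n x v ∈ Finset.range (n+1) := Finset.mem_range.mpr (by
    have := Np_le n x v; omega)
  rw [Finset.sum_eq_single_of_mem (Np n x v) hmem]
  · rw [indicator_of_mem]
    exact (mem_piece_iff hx (Np_le n x v) hv).mpr rfl
  · intro k hk hne
    rw [indicator_of_notMem]
    intro hmem'
    exact hne
      ((mem_piece_iff hx (by simpa using Nat.lt_succ_iff.mp (Finset.mem_range.mp hk)) hv).mp hmem').symm

lemma stepf_integrable : Integrable (stepf n g x) (volume.restrict (Ioc 0 1)) := by
  refine integrable_finset_sum _ fun k _ => ?_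
  have h1 : Integrable ((Ioc (Gp n k x) (Gp n (k+1) x)).indicator (fun _ => cc n g k)) volume := by
    rw [integrable_indicator_iff measurableSet_Ioc]
    refine (integrableOn_const_iff (C := cc n g k)).mpr (Or.inr ?_)
    rw [Real.volume_Ioc]
    exact ENNReal.ofReal_lt_top
  exact h1.restrict

lemma rep_integrable (hx : x ∈ Icc (0:ℝ) 1) :
    Integrable (fun v => cc n g (Np n x v)) (volume.restrict (Ioc 0 1)) := by
  refine (stepf_integrable (n := n) (g := g) (x := x)).congr ?_
  rw [EventuallyEq, ae_restrict_iff' measurableSet_Ioc]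
  exact Eventually.of_forall fun v hv => stepf_eq hx hv

lemma rep_eq (hx : x ∈ Icc (0:ℝ) 1) :
    ∫ v in Ioc (0:ℝ) 1, cc n g (Np n x v) = kant n g x := by
  have e1 : ∫ v in Ioc (0:ℝ) 1, cc n g (Np n x v) = ∫ v in Ioc (0:ℝ) 1, stepf n g x v :=
    setIntegral_congr_fun measurableSet_Ioc fun v hv => (stepf_eq hx hv).symm
  rw [e1, kant_eq_sum]
  unfold stepf
  rw [integral_finset_sum _ fun k _ => ?_]
  · refine Finset.sum_congr rfl fun k hk => ?_
    have hk' : k ≤ n := Nat.lt_succ_iff.mp (Finset.mem_range.mp hk)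
    rw [setIntegral_indicator measurableSet_Ioc,
        Set.inter_eq_self_of_subset_right (piece_subset hx (Finset.mem_range.mp hk)),
        setIntegral_const, Real.volume_real_Ioc,
        max_eq_left
          (by linarith [Gp_mono_idx hx (le_of_lt (Nat.lt_succ_self k)) (x := x) (n := n)] :
          (0:ℝ) ≤ Gp n (k+1) x - Gp n k x), smul_eq_mul]
    rw [Gp_succ]
    ring
  · have h1 : Integrable ((Ioc (Gp n k x) (Gp n (k+1) x)).indicator (fun _ => cc n g k)) volume := by
      rw [integrable_indicator_iff measurableSet_Ioc]
      refine (integrableOn_const_iff (C := cc n g k)).mpr (Or.inr ?_)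
      rw [Real.volume_Ioc]
      exact ENNReal.ofReal_lt_top
    exact h1.restrict

end Rep

lemma ofReal_integral_le {α : Type*} [MeasurableSpace α] (μ : Measure α) (f : α → ℝ) :
    ENNReal.ofReal (∫ a, f a ∂μ) ≤ ∫⁻ a, ENNReal.ofReal (f a) ∂μ := by
  by_cases hf : Integrable f μ
  · have h1 : ∫ a, f a ∂μ ≤ ∫ a, max (f a) 0 ∂μ :=
      integral_mono hf (hf.sup (integrable_zero _ _ _)) fun a => le_max_left _ _
    have h2 : ENNReal.ofReal (∫ a, max (f a) 0 ∂μ) = ∫⁻ a, ENNReal.ofReal (max (f a) 0) ∂μ :=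
      ofReal_integral_eq_lintegral_ofReal (hf.sup (integrable_zero _ _ _))
        (Eventually.of_forall fun a => le_max_right _ _)
    calc ENNReal.ofReal (∫ a, f a ∂μ) ≤ ENNReal.ofReal (∫ a, max (f a) 0 ∂μ) :=
          ENNReal.ofReal_le_ofReal h1
      _ = ∫⁻ a, ENNReal.ofReal (max (f a) 0) ∂μ := h2
      _ = ∫⁻ a, ENNReal.ofReal (f a) ∂μ := by
          refine lintegral_congr fun a => ?_
          rcases le_total (f a) 0 with h | h
          · rw [max_eq_right h, ENNReal.ofReal_zero, ENNReal.ofReal_of_nonpos h]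
          · rw [max_eq_left h]
  · rw [integral_undef hf]; simp

lemma sum_lintegral_le {α ι : Type*} [MeasurableSpace α] (μ : Measure α) (s : Finset ι)
    (f : ι → α → ℝ≥0∞) :
    ∑ j ∈ s, ∫⁻ a, f j a ∂μ ≤ ∫⁻ a, ∑ j ∈ s, f j a ∂μ := by
  classical
  induction s using Finset.induction with
  | empty => simp
  | @insert j s hj ih =>
    rw [Finset.sum_insert hj]
    refine le_trans (add_le_add_right ih _) (le_trans (le_lintegral_add _ _) (le_of_eq ?_))
    exact lintegral_congr fun a => by rw [Finset.sum_insert hj]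

/-- The key per-increment estimate: increments of the Kantorovich polynomial are dominated
by the double average of the corresponding increments of `g` along the monotone coupling. -/
lemma key_step {n : ℕ} {g : ℝ → ℝ} (hg : IntegrableOn g (Icc 0 1) volume)
    {x x' : ℝ} (hx : x ∈ Icc (0:ℝ) 1) (hx' : x' ∈ Icc (0:ℝ) 1) {lam : ℝ} (hlam : 0 < lam) :
    ENNReal.ofReal (|kant n g x' - kant n g x| / lam) ≤
      ∫⁻ v in Ioc (0:ℝ) 1, ∫⁻ u in Ioc (0:ℝ) 1,
        ENNReal.ofReal
          (|g (((Np n x' v : ℝ)+u)/((n:ℝ)+1)) - g (((Np n x v : ℝ)+u)/((n:ℝ)+1))| / lam) := by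
  have e : kant n g x' - kant n g x
      = ∫ v in Ioc (0:ℝ) 1, (cc n g (Np n x' v) - cc n g (Np n x v)) := by
    rw [← rep_eq hx', ← rep_eq hx]
    exact (integral_sub (rep_integrable hx') (rep_integrable hx)).symm
  rw [e]
  calc ENNReal.ofReal (|∫ v in Ioc (0:ℝ) 1, (cc n g (Np n x' v) - cc n g (Np n x v))| / lam)
      ≤ ENNReal.ofReal ((∫ v in Ioc (0:ℝ) 1, |cc n g (Np n x' v) - cc n g (Np n x v)|) / lam) := by
        apply ENNReal.ofReal_le_ofReal
        gcongr
        simpa [Real.norm_eq_abs] using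
          norm_integral_le_integral_norm (μ := volume.restrict (Ioc 0 1))
            (fun v => cc n g (Np n x' v) - cc n g (Np n x v))
    _ = ENNReal.ofReal (∫ v in Ioc (0:ℝ) 1, (|cc n g (Np n x' v) - cc n g (Np n x v)| / lam)) := by
        rw [integral_div]
    _ ≤ ∫⁻ v in Ioc (0:ℝ) 1,
          ENNReal.ofReal (|cc n g (Np n x' v) - cc n g (Np n x v)| / lam) :=
        ofReal_integral_le _ _
    _ ≤ _ := by
        refine lintegral_mono_ae ?_
        filter_upwards [ae_restrict_mem measurableSet_Ioc] with v _
        have e2 : cc n g (Np n x' v) - cc n g (Np n x v)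
            = ∫ u in Ioc (0:ℝ) 1,
                (g (((Np n x' v : ℝ)+u)/((n:ℝ)+1)) - g (((Np n x v : ℝ)+u)/((n:ℝ)+1))) := by
          rw [cc_eq, cc_eq]
          exact (integral_sub (integrableOn_comp hg (Np_le n x' v))
            (integrableOn_comp hg (Np_le n x v))).symm
        rw [e2]
        calc ENNReal.ofReal (|∫ u in Ioc (0:ℝ) 1,
                (g (((Np n x' v : ℝ)+u)/((n:ℝ)+1)) - g (((Np n x v : ℝ)+u)/((n:ℝ)+1)))| / lam)
            ≤ ENNReal.ofReal ((∫ u in Ioc (0:ℝ) 1,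
                |g (((Np n x' v : ℝ)+u)/((n:ℝ)+1)) - g (((Np n x v : ℝ)+u)/((n:ℝ)+1))|) / lam) := by
              apply ENNReal.ofReal_le_ofReal
              gcongr
              simpa [Real.norm_eq_abs] using
                norm_integral_le_integral_norm (μ := volume.restrict (Ioc 0 1))
                  (fun u => g (((Np n x' v : ℝ)+u)/((n:ℝ)+1)) - g (((Np n x v : ℝ)+u)/((n:ℝ)+1)))
          _ = ENNReal.ofReal (∫ u in Ioc (0:ℝ) 1,
                (|g (((Np n x' v : ℝ)+u)/((n:ℝ)+1)) - g (((Np n x v : ℝ)+u)/((n:ℝ)+1))| / lam)) := by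
              rw [integral_div]
          _ ≤ _ := ofReal_integral_le _ _

/-- Kantorovich polynomials diminish the Λ-variation. -/
lemma kant_lamVar_le (l : ℕ → ℝ) (hl : ∀ i, 0 < l i) (n : ℕ) (g : ℝ → ℝ)
    (hg : IntegrableOn g (Icc 0 1) volume) :
    lamVar l (kant n g) ≤ lamVar l g := by
  refine iSup_le fun m => iSup_le fun x => iSup_le fun hmono => iSup_le fun hmem =>
    iSup_le fun β => ?_
  calc ∑ j : Fin m, ENNReal.ofReal (|kant n g (x j.succ) - kant n g (x j.castSucc)| / l (β j))
      ≤ ∑ j : Fin m, ∫⁻ v in Ioc (0:ℝ) 1, ∫⁻ u in Ioc (0:ℝ) 1,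
          ENNReal.ofReal
            (|g (((Np n (x j.succ) v : ℝ)+u)/((n:ℝ)+1))
              - g (((Np n (x j.castSucc) v : ℝ)+u)/((n:ℝ)+1))| / l (β j)) :=
        Finset.sum_le_sum fun j _ => key_step hg (hmem _) (hmem _) (hl (β j))
    _ ≤ ∫⁻ v in Ioc (0:ℝ) 1, ∑ j : Fin m, ∫⁻ u in Ioc (0:ℝ) 1,
          ENNReal.ofReal
            (|g (((Np n (x j.succ) v : ℝ)+u)/((n:ℝ)+1))
              - g (((Np n (x j.castSucc) v : ℝ)+u)/((n:ℝ)+1))| / l (β j)) :=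
        sum_lintegral_le _ _ _
    _ ≤ ∫⁻ v in Ioc (0:ℝ) 1, ∫⁻ u in Ioc (0:ℝ) 1, ∑ j : Fin m,
          ENNReal.ofReal
            (|g (((Np n (x j.succ) v : ℝ)+u)/((n:ℝ)+1))
              - g (((Np n (x j.castSucc) v : ℝ)+u)/((n:ℝ)+1))| / l (β j)) :=
        lintegral_mono fun v => sum_lintegral_le _ _ _
    _ ≤ ∫⁻ _ in Ioc (0:ℝ) 1, ∫⁻ _ in Ioc (0:ℝ) 1, lamVar l g := by
        refine lintegral_mono fun v => ?_
        refine lintegral_mono_ae ?_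
        filter_upwards [ae_restrict_mem measurableSet_Ioc] with u hu
        have hn : (0:ℝ) < (n:ℝ)+1 := by positivity
        have hy_mono : Monotone (fun j : Fin (m+1) => ((Np n (x j) v : ℝ) + u)/((n:ℝ)+1)) := by
          intro a b hab
          have h2 : Np n (x a) v ≤ Np n (x b) v := Np_mono_x (hmem a) (hmem b) (hmono hab)
          have h3 : ((Np n (x a) v : ℕ) : ℝ) ≤ ((Np n (x b) v : ℕ) : ℝ) := Nat.cast_le.mpr h2
          exact (div_le_div_iff_of_pos_right hn).mpr (by linarith)
        have hy_mem : ∀ j : Fin (m+1),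
            ((Np n (x j) v : ℝ) + u)/((n:ℝ)+1) ∈ Icc (0:ℝ) 1 := by
          intro j
          have h2 : Np n (x j) v ≤ n := Np_le n (x j) v
          have h3 : ((Np n (x j) v : ℕ) : ℝ) ≤ (n:ℝ) := Nat.cast_le.mpr h2
          constructor
          · have h4 : (0:ℝ) ≤ (Np n (x j) v : ℝ) := Nat.cast_nonneg _
            have h5 : (0:ℝ) ≤ u := le_of_lt hu.1
            positivity
          · rw [div_le_one hn]
            linarith [hu.2]
        exact le_iSup_of_le m (le_iSup_of_le
          (fun j : Fin (m+1) => ((Np n (x j) v : ℝ) + u)/((n:ℝ)+1))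
          (le_iSup_of_le hy_mono (le_iSup_of_le hy_mem (le_iSup_of_le β le_rfl))))
    _ = lamVar l g := by
        rw [setLIntegral_const, setLIntegral_const, Real.volume_Ioc]
        norm_num

lemma kant_congr {f g : ℝ → ℝ} (n : ℕ) (h : f =ᵐ[volume.restrict (Set.Icc 0 1)] g) :
    kant n f = kant n g := by
  funext x
  unfold kant
  refine Finset.sum_congr rfl fun k hk => ?_
  have hk' : k ≤ n := Nat.lt_succ_iff.mp (Finset.mem_range.mp hk)
  have hint : (∫ t in ((k : ℝ) / (n + 1))..(((k : ℝ) + 1) / (n + 1)), f t)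
      = ∫ t in ((k : ℝ) / (n + 1))..(((k : ℝ) + 1) / (n + 1)), g t := by
    refine intervalIntegral.integral_congr_ae ?_
    have h' : ∀ᵐ t ∂volume, t ∈ Icc (0:ℝ) 1 → f t = g t :=
      (ae_restrict_iff' measurableSet_Icc).mp h
    filter_upwards [h'] with t ht hmem
    apply ht
    have hn : (0:ℝ) < (n:ℝ)+1 := by positivity
    have hab : (k:ℝ)/((n:ℝ)+1) ≤ ((k:ℝ)+1)/((n:ℝ)+1) := by
      gcongr
      linarith
    rw [Set.uIoc_of_le hab] at hmem
    exact subint_subset hk' hmem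
  rw [hint]

end KantAux

open KantAux in
/-- If `Λ` is a Λ-sequence and `f` is Lebesgue-integrable on `[0,1]` with
`var_Λ(f) < ⊤`, then `V_Λ(K_n f) ≤ var_Λ(f)` for all `n`, and consequently
`var_Λ(K_n f) ≤ var_Λ(f)`: the Kantorovich polynomials diminish the lower Λ-variation. -/
theorem kantorovich_diminishes_lower_lamVar (l : ℕ → ℝ) (hl : IsLambdaSeq l)
    (f : ℝ → ℝ) (hint : IntegrableOn f (Set.Icc 0 1) volume)
    (hf : lowerLamVar l f < ⊤) (n : ℕ) :
    lamVar l (kant n f) ≤ lowerLamVar l f ∧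
    lowerLamVar l (kant n f) ≤ lowerLamVar l f := by
  have hpos := hl.2.1
  have main : ∀ gg : ℝ → ℝ, f =ᵐ[volume.restrict (Set.Icc 0 1)] gg →
      lamVar l (kant n f) ≤ lamVar l gg := by
    intro gg hgg
    rw [kant_congr n hgg]
    exact kant_lamVar_le l hpos n gg (hint.congr hgg)
  have h1 : lamVar l (kant n f) ≤ lowerLamVar l f :=
    le_iInf fun gg => le_iInf fun hgg => main gg hgg
  refine ⟨h1, le_trans ?_ h1⟩
  exact iInf_le_of_le (kant n f) (iInf_le_of_le (Filter.EventuallyEq.refl _ _) le_rfl)
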